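/- Let q > 2 be a prime power and let s, t₁, t₂ be natural numbers with t₁, t₂ ≥ 1, gcd(s,t₁) = 1 and gcd(s,t₂) = 1. Then the toric codes C_{T(s,t₁)} and C_{T(s,t₂)} over 𝔽_q are monomially equivalent if and only if gcd(t₁, q−1) = gcd(t₂, q−1). -/

import Mathlib

open Finset

/-- The polynomial `a + b·x + c·z + d·x^s·y^t·z` from `T(s,t)`,
evaluated at `(x,y,z) = (v.1, v.2.1, v.2.2) ∈ (Fˣ)³`. -/
def fT {F : Type} [Field F] (s t : ℕ) (a b c d : F)
    (v : Fˣ × Fˣ × Fˣ) : F :=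
  a + b * (v.1 : F) + c * (v.2.2 : F) +
    d * (v.1 : F) ^ s * (v.2.1 : F) ^ t * (v.2.2 : F)

/-- The toric code `C_{T(s,t)}`: all evaluation vectors of polynomials
`a + b·x + c·z + d·x^s·y^t·z` on `(Fˣ)³`. -/
def toricCodeT (F : Type) [Field F] (s t : ℕ) : Set (Fˣ × Fˣ × Fˣ → F) :=
  {w | ∃ a b c d : F, w = fT s t a b c d}

/-- Monomial equivalence of two codes indexed by `(Fˣ)³`: there is a
permutation `π` of the index set and a nonzero scalar `lam v` for each index
`v` such that `C₂ = { v ↦ lam v * c (π v) : c ∈ C₁ }`. -/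
def MonomiallyEquiv {F : Type} [Field F]
    (C₁ C₂ : Set (Fˣ × Fˣ × Fˣ → F)) : Prop :=
  ∃ (π : Equiv.Perm (Fˣ × Fˣ × Fˣ)) (lam : Fˣ × Fˣ × Fˣ → Fˣ),
    C₂ = {w | ∃ c ∈ C₁, w = fun v => (lam v : F) * c (π v)}



section ToricAux

set_option linter.unusedSectionVars false

/-- number of zero coordinates of a word -/
noncomputable def zcount {F : Type} [Field F] (w : Fˣ × Fˣ × Fˣ → F) : ℕ :=
  Nat.card {v : Fˣ × Fˣ × Fˣ // w v = 0}

variable {F : Type} [Field F] [Fintype F]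

lemma zcount_perm (π : Equiv.Perm (Fˣ × Fˣ × Fˣ)) (lam : Fˣ × Fˣ × Fˣ → Fˣ)
    (c : Fˣ × Fˣ × Fˣ → F) :
    zcount (fun v => (lam v : F) * c (π v)) = zcount c := by
  unfold zcount
  refine Nat.card_congr ?_
  refine (Equiv.subtypeEquivRight (fun v => ?_)).trans
    (Equiv.subtypeEquiv π (fun v => Iff.rfl))
  simp [Units.ne_zero]

lemma zcount_zero : zcount (0 : (Fˣ × Fˣ × Fˣ) → F) = (Nat.card Fˣ)^3 := by
  unfold zcount
  rw [Nat.card_congr (Equiv.subtypeUnivEquiv (fun v => Pi.zero_apply v)), Nat.card_prod, Nat.card_prod]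
  ring

lemma card_ker_mul_card_range {G H : Type*} [Group G] [Group H] (φ : G →* H) :
    Nat.card {g : G // φ g = 1} * Nat.card φ.range = Nat.card G := by
  have h1 : Nat.card {g : G // φ g = 1} = Nat.card φ.ker :=
    Nat.card_congr (Equiv.subtypeEquivRight (fun g => MonoidHom.mem_ker.symm))
  rw [h1, Subgroup.card_eq_card_quotient_mul_card_subgroup φ.ker,
    Nat.card_congr (QuotientGroup.quotientKerEquivRange φ).toEquiv]
  exact Nat.mul_comm _ _

lemma fiber_translate {G H : Type*} [CommGroup G] [Group H] (φ : G →* H) (α : H)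
    (x₀ : G) (hx₀ : φ x₀ = α) :
    Nat.card {g : G // φ g = α} = Nat.card {g : G // φ g = 1} := by
  refine Nat.card_congr ⟨fun g => ⟨g.1 * x₀⁻¹, ?_⟩, fun g => ⟨g.1 * x₀, ?_⟩, ?_, ?_⟩
  · simp [map_mul, g.2, hx₀]
  · simp [map_mul, g.2, hx₀]
  · intro g; ext; simp
  · intro g; ext; simp


/-- the character `(x,y) ↦ x^s y^t` -/
def chiHom (F : Type) [Field F] (s t : ℕ) : Fˣ × Fˣ →* Fˣ :=
  ((powMonoidHom s).comp (MonoidHom.fst Fˣ Fˣ)) *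
    ((powMonoidHom t).comp (MonoidHom.snd Fˣ Fˣ))

lemma chiHom_apply (s t : ℕ) (p : Fˣ × Fˣ) : chiHom F s t p = p.1 ^ s * p.2 ^ t := rfl

lemma chi_surj (s t : ℕ) (hst : Nat.gcd s t = 1) :
    Function.Surjective (chiHom F s t) := by
  intro α
  refine ⟨(α ^ Nat.gcdA s t, α ^ Nat.gcdB s t), ?_⟩
  rw [chiHom_apply]
  have h : ((Nat.gcd s t : ℤ)) = s * Nat.gcdA s t + t * Nat.gcdB s t := Nat.gcd_eq_gcd_ab s t
  rw [hst] at h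
  push_cast at h
  calc (α ^ Nat.gcdA s t) ^ s * (α ^ Nat.gcdB s t) ^ t
      = α ^ ((s : ℤ) * Nat.gcdA s t + (t : ℤ) * Nat.gcdB s t) := by
        rw [zpow_add, ← zpow_natCast (α ^ Nat.gcdA s t) s, ← zpow_natCast (α ^ Nat.gcdB s t) t,
          ← zpow_mul, ← zpow_mul, mul_comm (Nat.gcdA s t : ℤ), mul_comm (Nat.gcdB s t : ℤ)]
    _ = α := by rw [← h, zpow_one]

/-- number of solutions of `x^s y^t = α` equals `Nat.card Fˣ` when `gcd s t = 1`. -/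
lemma card_chi_fiber (s t : ℕ) (hst : Nat.gcd s t = 1) (α : Fˣ) :
    Nat.card {p : Fˣ × Fˣ // p.1 ^ s * p.2 ^ t = α} = Nat.card Fˣ := by
  obtain ⟨p₀, hp₀⟩ := chi_surj s t hst α
  have h1 : Nat.card {p : Fˣ × Fˣ // p.1 ^ s * p.2 ^ t = α}
      = Nat.card {p : Fˣ × Fˣ // chiHom F s t p = α} := rfl
  rw [h1, fiber_translate (chiHom F s t) α p₀ hp₀]
  have h2 := card_ker_mul_card_range (chiHom F s t)
  have h3 : Nat.card (chiHom F s t).range = Nat.card Fˣ := by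
    rw [MonoidHom.range_eq_top_of_surjective _ (chi_surj s t hst)]
    exact Subgroup.card_top
  rw [h3, Nat.card_prod] at h2
  have hm : 0 < Nat.card Fˣ := Nat.card_pos
  exact Nat.eq_of_mul_eq_mul_right hm h2

/-- number of `t`-th roots of unity is `gcd t (q-1)`. -/
lemma card_tRoots (t : ℕ) (ht : t ≠ 0) :
    Nat.card {y : Fˣ // y ^ t = 1} = Nat.gcd t (Nat.card Fˣ) := by
  obtain ⟨ζ, hζ⟩ := IsCyclic.exists_generator (α := Fˣ)
  have h1 : Nat.card {y : Fˣ // y ^ t = 1}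
      = Nat.card {y : Fˣ // powMonoidHom t y = 1} := rfl
  have h2 := card_ker_mul_card_range (powMonoidHom t : Fˣ →* Fˣ)
  have hrange : (powMonoidHom t : Fˣ →* Fˣ).range = Subgroup.zpowers (ζ ^ t) := by
    apply le_antisymm
    · rintro _ ⟨x, rfl⟩
      obtain ⟨k, rfl⟩ := hζ x
      refine ⟨k, ?_⟩
      show (ζ ^ t) ^ k = powMonoidHom t (ζ ^ k)
      rw [powMonoidHom_apply, ← zpow_natCast (ζ ^ k) t, ← zpow_mul, ← zpow_natCast ζ t,
        ← zpow_mul, mul_comm]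
    · rw [Subgroup.zpowers_le]
      exact ⟨ζ, rfl⟩
  have hord : orderOf ζ = Nat.card Fˣ := orderOf_eq_card_of_forall_mem_zpowers hζ
  have h3 : Nat.card (powMonoidHom t : Fˣ →* Fˣ).range
      = Nat.card Fˣ / Nat.gcd (Nat.card Fˣ) t := by
    rw [hrange, Nat.card_zpowers, orderOf_pow' ζ ht, hord]
  rw [h3] at h2
  set g := Nat.gcd (Nat.card Fˣ) t with hg
  obtain ⟨k, hk⟩ : g ∣ Nat.card Fˣ := Nat.gcd_dvd_left _ _
  have hgpos : 0 < g := Nat.gcd_pos_of_pos_left _ Nat.card_pos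
  have hkpos : 0 < k := by
    rcases Nat.eq_zero_or_pos k with rfl | h
    · rw [Nat.mul_zero] at hk; have := Nat.card_pos (α := Fˣ); omega
    · exact h
  have hdiv : Nat.card Fˣ / g = k := by rw [hk, Nat.mul_div_cancel_left _ hgpos]
  rw [hdiv] at h2
  have h4 : Nat.card {y : Fˣ // (powMonoidHom t : Fˣ →* Fˣ) y = 1} * k = g * k := by
    rw [h2, hk]
  rw [h1, Nat.eq_of_mul_eq_mul_right hkpos h4, hg, Nat.gcd_comm]


lemma natCard_subtype {α : Type} [Fintype α] (p : α → Prop) [DecidablePred p] :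
    Nat.card {x // p x} = #(univ.filter p) := by
  rw [Nat.card_eq_fintype_card, Fintype.card_subtype]

lemma master (A : Fˣ → F) (B : Fˣ × Fˣ → F) :
    Nat.card {v : Fˣ × Fˣ × Fˣ // B (v.1, v.2.1) * (v.2.2 : F) + A v.1 = 0}
      + Nat.card {p : Fˣ × Fˣ // A p.1 = 0}
      + Nat.card {p : Fˣ × Fˣ // B p = 0}
    = Nat.card Fˣ ^ 2
      + (Nat.card Fˣ + 1) * Nat.card {p : Fˣ × Fˣ // A p.1 = 0 ∧ B p = 0} := by
  classical
  rw [natCard_subtype, natCard_subtype, natCard_subtype, natCard_subtype]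
  have key : #(univ.filter fun v : Fˣ × Fˣ × Fˣ => B (v.1, v.2.1) * (v.2.2 : F) + A v.1 = 0)
      = ∑ p : Fˣ × Fˣ, #(univ.filter fun z : Fˣ => B p * (z : F) + A p.1 = 0) := by
    rw [Finset.card_eq_sum_card_fiberwise
      (f := fun v : Fˣ × Fˣ × Fˣ => (v.1, v.2.1)) (t := univ) (fun _ _ => mem_univ _)]
    refine Finset.sum_congr rfl fun p _ => ?_
    rw [Finset.filter_filter]
    refine Finset.card_nbij' (fun v => v.2.2) (fun z => (p.1, p.2, z)) ?_ ?_ ?_ ?_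
    · intro v hv
      simp only [coe_filter, mem_coe, Set.mem_setOf_eq, mem_filter, mem_univ, true_and] at hv ⊢
      obtain ⟨h1, h2⟩ := hv
      rw [← h2]
      exact h1
    · intro z hz
      simp only [coe_filter, mem_coe, Set.mem_setOf_eq, mem_filter, mem_univ, true_and] at hz ⊢
      exact ⟨hz, trivial⟩
    · intro v hv
      simp only [coe_filter, mem_coe, Set.mem_setOf_eq, mem_filter, mem_univ, true_and] at hv
      obtain ⟨h1, h2⟩ := hv
      rw [← h2]
    · intro z hz; rfl
  rw [key]
  have count_z : ∀ p : Fˣ × Fˣ,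
      #(univ.filter fun z : Fˣ => B p * (z : F) + A p.1 = 0)
      = (if A p.1 = 0 ∧ B p = 0 then Nat.card Fˣ else 0)
        + (if ¬ A p.1 = 0 ∧ ¬ B p = 0 then 1 else 0) := by
    intro p
    by_cases hB : B p = 0 <;> by_cases hA : A p.1 = 0
    · rw [if_pos ⟨hA, hB⟩, if_neg (by tauto)]
      rw [Finset.filter_true_of_mem (fun z _ => by rw [hA, hB]; ring)]
      simp [Nat.card_eq_fintype_card]
    · rw [if_neg (by tauto), if_neg (by tauto)]
      rw [Finset.filter_false_of_mem (fun z _ h => hA (by rw [hB] at h; simpa using h))]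
      simp
    · rw [if_neg (by tauto), if_neg (by tauto)]
      rw [Finset.filter_false_of_mem (fun z _ h => ?_)]
      · simp
      · rw [hA, add_zero] at h
        exact hB ((mul_eq_zero.mp h).resolve_right (Units.ne_zero z))
    · rw [if_neg (by tauto), if_pos ⟨hA, hB⟩]
      have hval : -(A p.1) / B p ≠ 0 := div_ne_zero (neg_ne_zero.mpr hA) hB
      have hfil : (univ.filter fun z : Fˣ => B p * (z : F) + A p.1 = 0)
          = {Units.mk0 (-(A p.1) / B p) hval} := by
        ext z
        simp only [mem_filter, mem_univ, true_and, mem_singleton]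
        constructor
        · intro h
          apply Units.ext
          show (z : F) = -(A p.1) / B p
          field_simp
          linear_combination h
        · rintro rfl
          show B p * (-(A p.1) / B p) + A p.1 = 0
          field_simp
          ring
      rw [hfil, card_singleton]
  rw [Finset.sum_congr rfl (fun p _ => count_z p), Finset.sum_add_distrib,
    ← Finset.sum_filter, ← Finset.sum_filter, Finset.sum_const, Finset.sum_const,
    smul_eq_mul, smul_eq_mul, mul_one]
  have hneg : (univ.filter fun p : Fˣ × Fˣ => ¬(A p.1 = 0 ∨ B p = 0))
      = univ.filter fun p : Fˣ × Fˣ => ¬ A p.1 = 0 ∧ ¬ B p = 0 :=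
    Finset.filter_congr (fun p _ => by tauto)
  have hIE := Finset.card_filter_add_card_filter_not
    (s := (univ : Finset (Fˣ × Fˣ))) (p := fun p => A p.1 = 0 ∨ B p = 0)
  rw [hneg] at hIE
  have hUI : #(univ.filter fun p : Fˣ × Fˣ => A p.1 = 0 ∨ B p = 0)
      + #(univ.filter fun p : Fˣ × Fˣ => A p.1 = 0 ∧ B p = 0)
      = #(univ.filter fun p : Fˣ × Fˣ => A p.1 = 0)
      + #(univ.filter fun p : Fˣ × Fˣ => B p = 0) := by
    rw [Finset.filter_or, Finset.filter_and]
    exact Finset.card_union_add_card_inter _ _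
  have hcardU : #(univ : Finset (Fˣ × Fˣ)) = Nat.card Fˣ ^ 2 := by
    rw [Finset.card_univ, Fintype.card_prod, Nat.card_eq_fintype_card, sq]
  rw [hcardU] at hIE
  have hexp : (Nat.card Fˣ + 1) * #(univ.filter fun p : Fˣ × Fˣ => A p.1 = 0 ∧ B p = 0)
      = #(univ.filter fun p : Fˣ × Fˣ => A p.1 = 0 ∧ B p = 0) * Nat.card Fˣ
        + #(univ.filter fun p : Fˣ × Fˣ => A p.1 = 0 ∧ B p = 0) := by ring
  omega


lemma master_fT (s t : ℕ) (a b c d : F) :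
    zcount (fT s t a b c d)
      + Nat.card {p : Fˣ × Fˣ // a + b * (p.1 : F) = 0}
      + Nat.card {p : Fˣ × Fˣ // c + d * (p.1 : F) ^ s * (p.2 : F) ^ t = 0}
    = Nat.card Fˣ ^ 2 + (Nat.card Fˣ + 1) *
        Nat.card {p : Fˣ × Fˣ // a + b * (p.1 : F) = 0 ∧
          c + d * (p.1 : F) ^ s * (p.2 : F) ^ t = 0} := by
  have h := master (F := F) (fun x => a + b * (x : F))
    (fun p => c + d * (p.1 : F) ^ s * (p.2 : F) ^ t)
  have hz : zcount (fT s t a b c d)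
      = Nat.card {v : Fˣ × Fˣ × Fˣ //
          (c + d * (v.1 : F) ^ s * (v.2.1 : F) ^ t) * (v.2.2 : F) + (a + b * (v.1 : F)) = 0} :=
    Nat.card_congr (Equiv.subtypeEquivRight fun v => by
      simp only [fT]
      constructor <;> intro h <;> linear_combination h)
  rw [hz]
  exact h

lemma card_fst_eq (x₀ : Fˣ) : Nat.card {p : Fˣ × Fˣ // p.1 = x₀} = Nat.card Fˣ :=
  Nat.card_congr
    ⟨fun p => p.1.2, fun y => ⟨(x₀, y), rfl⟩,
      fun p => Subtype.ext (Prod.ext p.2.symm rfl), fun y => rfl⟩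

lemma NA_full {a b : F} (ha : a ≠ 0) (hb : b ≠ 0) :
    Nat.card {p : Fˣ × Fˣ // a + b * (p.1 : F) = 0} = Nat.card Fˣ := by
  have hx : (-a / b) ≠ 0 := div_ne_zero (neg_ne_zero.mpr ha) hb
  have he : ∀ p : Fˣ × Fˣ, (a + b * (p.1 : F) = 0) ↔ p.1 = Units.mk0 (-a / b) hx := by
    intro p
    constructor
    · intro h
      apply Units.ext
      show (p.1 : F) = -a / b
      field_simp
      linear_combination h
    · intro h
      have : (p.1 : F) = -a / b := by rw [h]; rfl
      rw [this]
      field_simp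
      ring
  rw [Nat.card_congr (Equiv.subtypeEquivRight he), card_fst_eq]

lemma NA_empty {a b : F} (h : ¬(a ≠ 0 ∧ b ≠ 0)) (hne : ¬(a = 0 ∧ b = 0)) :
    Nat.card {p : Fˣ × Fˣ // a + b * (p.1 : F) = 0} = 0 := by
  have : IsEmpty {p : Fˣ × Fˣ // a + b * (p.1 : F) = 0} := by
    constructor
    rintro ⟨p, hp⟩
    by_cases hb : b = 0
    · rw [hb, zero_mul, add_zero] at hp
      exact hne ⟨hp, hb⟩
    · have ha : a = 0 := by tauto
      rw [ha, zero_add] at hp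
      rcases mul_eq_zero.mp hp with h1 | h1
      · exact hb h1
      · exact Units.ne_zero _ h1
  exact Nat.card_of_isEmpty

lemma NB_full (s t : ℕ) {c d : F} (hc : c ≠ 0) (hd : d ≠ 0) (hst : Nat.gcd s t = 1) :
    Nat.card {p : Fˣ × Fˣ // c + d * (p.1 : F) ^ s * (p.2 : F) ^ t = 0} = Nat.card Fˣ := by
  have hα : (-c / d) ≠ 0 := div_ne_zero (neg_ne_zero.mpr hc) hd
  have he : ∀ p : Fˣ × Fˣ,
      (c + d * (p.1 : F) ^ s * (p.2 : F) ^ t = 0) ↔ p.1 ^ s * p.2 ^ t = Units.mk0 (-c / d) hα := by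
    intro p
    have hcoe : ((p.1 ^ s * p.2 ^ t : Fˣ) : F) = (p.1 : F) ^ s * (p.2 : F) ^ t := by
      push_cast; ring
    constructor
    · intro h
      apply Units.ext
      rw [hcoe]
      show (p.1 : F) ^ s * (p.2 : F) ^ t = -c / d
      field_simp
      linear_combination h
    · intro h
      have h2 : (p.1 : F) ^ s * (p.2 : F) ^ t = -c / d := by rw [← hcoe, h]; rfl
      have h3 : d * ((p.1 : F) ^ s * (p.2 : F) ^ t) = -c := by
        rw [h2]; field_simp
      linear_combination h3
  rw [Nat.card_congr (Equiv.subtypeEquivRight he), card_chi_fiber s t hst]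

lemma NB_empty (s t : ℕ) {c d : F} (h : ¬(c ≠ 0 ∧ d ≠ 0)) (hne : ¬(c = 0 ∧ d = 0)) :
    Nat.card {p : Fˣ × Fˣ // c + d * (p.1 : F) ^ s * (p.2 : F) ^ t = 0} = 0 := by
  have : IsEmpty {p : Fˣ × Fˣ // c + d * (p.1 : F) ^ s * (p.2 : F) ^ t = 0} := by
    constructor
    rintro ⟨p, hp⟩
    by_cases hdz : d = 0
    · rw [hdz, zero_mul, zero_mul, add_zero] at hp
      exact hne ⟨hp, hdz⟩
    · have hc : c = 0 := by tauto
      rw [hc, zero_add] at hp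
      have : d * (p.1 : F) ^ s * (p.2 : F) ^ t ≠ 0 :=
        mul_ne_zero (mul_ne_zero hdz (pow_ne_zero _ (Units.ne_zero _)))
          (pow_ne_zero _ (Units.ne_zero _))
      exact this hp
  exact Nat.card_of_isEmpty


lemma SS_le_NA (s t : ℕ) (a b c d : F) :
    Nat.card {p : Fˣ × Fˣ // a + b * (p.1 : F) = 0 ∧
        c + d * (p.1 : F) ^ s * (p.2 : F) ^ t = 0}
      ≤ Nat.card {p : Fˣ × Fˣ // a + b * (p.1 : F) = 0} :=
  Nat.card_le_card_of_injective (fun p => ⟨p.1, p.2.1⟩)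
    (by intro p q h; simp only [Subtype.mk.injEq] at h; exact Subtype.ext h)

lemma SS_le_NB (s t : ℕ) (a b c d : F) :
    Nat.card {p : Fˣ × Fˣ // a + b * (p.1 : F) = 0 ∧
        c + d * (p.1 : F) ^ s * (p.2 : F) ^ t = 0}
      ≤ Nat.card {p : Fˣ × Fˣ // c + d * (p.1 : F) ^ s * (p.2 : F) ^ t = 0} :=
  Nat.card_le_card_of_injective (fun p => ⟨p.1, p.2.2⟩)
    (by intro p q h; simp only [Subtype.mk.injEq] at h; exact Subtype.ext h)

lemma SS_le_g (s t : ℕ) (ht : t ≠ 0) {a b c d : F}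
    (ha : a ≠ 0) (hb : b ≠ 0) (hd : d ≠ 0) :
    Nat.card {p : Fˣ × Fˣ // a + b * (p.1 : F) = 0 ∧
        c + d * (p.1 : F) ^ s * (p.2 : F) ^ t = 0}
      ≤ Nat.gcd t (Nat.card Fˣ) := by
  rw [← card_tRoots t ht]
  rcases isEmpty_or_nonempty {p : Fˣ × Fˣ // a + b * (p.1 : F) = 0 ∧
      c + d * (p.1 : F) ^ s * (p.2 : F) ^ t = 0} with hE | ⟨⟨p₀, h₀⟩⟩
  · rw [Nat.card_of_isEmpty]
    exact Nat.zero_le _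
  · have hfst : ∀ p : Fˣ × Fˣ,
        (a + b * (p.1 : F) = 0 ∧ c + d * (p.1 : F) ^ s * (p.2 : F) ^ t = 0) →
        p.1 = p₀.1 := by
      intro p hp
      apply Units.ext
      have e1 : b * (p.1 : F) = -a := by linear_combination hp.1
      have e2 : b * (p₀.1 : F) = -a := by linear_combination h₀.1
      exact mul_left_cancel₀ hb (e1.trans e2.symm)
    have hsnd : ∀ p : Fˣ × Fˣ,
        (a + b * (p.1 : F) = 0 ∧ c + d * (p.1 : F) ^ s * (p.2 : F) ^ t = 0) →
        p.2 ^ t = p₀.2 ^ t := by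
      intro p hp
      have hx := hfst p hp
      apply Units.ext
      have hne : d * (p₀.1 : F) ^ s ≠ 0 :=
        mul_ne_zero hd (pow_ne_zero _ (Units.ne_zero _))
      have e1 : (d * (p₀.1 : F) ^ s) * (p.2 : F) ^ t = -c := by
        rw [← hx]; linear_combination hp.2
      have e2 : (d * (p₀.1 : F) ^ s) * (p₀.2 : F) ^ t = -c := by
        linear_combination h₀.2
      have := mul_left_cancel₀ hne (e1.trans e2.symm)
      push_cast
      exact this
    refine Nat.card_le_card_of_injective
      (fun p => ⟨p.1.2 * p₀.2⁻¹, ?_⟩) ?_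
    · have := hsnd p.1 p.2
      rw [mul_pow, this, inv_pow]
      exact mul_inv_cancel _
    · intro p q h
      have h1 : p.1.2 * p₀.2⁻¹ = q.1.2 * p₀.2⁻¹ := Subtype.ext_iff.mp h
      have h2 : p.1.2 = q.1.2 := mul_right_cancel h1
      have h3 : p.1.1 = q.1.1 := (hfst p.1 p.2).trans (hfst q.1 q.2).symm
      exact Subtype.ext (Prod.ext h3 h2)


lemma NA_both_zero : Nat.card {p : Fˣ × Fˣ // (0:F) + 0 * (p.1 : F) = 0} = Nat.card Fˣ ^ 2 := by
  rw [Nat.card_congr (Equiv.subtypeUnivEquiv (fun p => by simp)), Nat.card_prod, sq]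

lemma NB_both_zero (s t : ℕ) :
    Nat.card {p : Fˣ × Fˣ // (0:F) + 0 * (p.1 : F) ^ s * (p.2 : F) ^ t = 0} = Nat.card Fˣ ^ 2 := by
  rw [Nat.card_congr (Equiv.subtypeUnivEquiv (fun p => by simp)), Nat.card_prod, sq]

lemma fT_zero (s t : ℕ) : fT (F := F) s t 0 0 0 0 = 0 := by
  funext v; simp [fT]

lemma zcount_le (s t : ℕ) (ht : t ≠ 0) (hst : Nat.gcd s t = 1) (a b c d : F)
    (hnz : ¬(a = 0 ∧ b = 0 ∧ c = 0 ∧ d = 0)) :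
    zcount (fT s t a b c d) ≤
      max (Nat.card Fˣ ^ 2)
        (Nat.card Fˣ ^ 2 + (Nat.card Fˣ + 1) * Nat.gcd t (Nat.card Fˣ) - 2 * Nat.card Fˣ) := by
  have hmaster := master_fT s t a b c d
  by_cases hab : a = 0 ∧ b = 0
  · obtain ⟨rfl, rfl⟩ := hab
    have hcd : ¬(c = 0 ∧ d = 0) := by tauto
    rw [NA_both_zero] at hmaster
    have hSS : Nat.card {p : Fˣ × Fˣ // (0:F) + 0 * (p.1 : F) = 0 ∧
          c + d * (p.1 : F) ^ s * (p.2 : F) ^ t = 0}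
        = Nat.card {p : Fˣ × Fˣ // c + d * (p.1 : F) ^ s * (p.2 : F) ^ t = 0} :=
      Nat.card_congr (Equiv.subtypeEquivRight fun p => and_iff_right (by simp))
    rw [hSS] at hmaster
    have hNB : Nat.card {p : Fˣ × Fˣ // c + d * (p.1 : F) ^ s * (p.2 : F) ^ t = 0}
        ≤ Nat.card Fˣ := by
      by_cases hcd2 : c ≠ 0 ∧ d ≠ 0
      · rw [NB_full s t hcd2.1 hcd2.2 hst]
      · rw [NB_empty s t hcd2 hcd]; exact Nat.zero_le _
    have hexp : (Nat.card Fˣ + 1) *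
        Nat.card {p : Fˣ × Fˣ // c + d * (p.1 : F) ^ s * (p.2 : F) ^ t = 0}
        = Nat.card Fˣ * Nat.card {p : Fˣ × Fˣ // c + d * (p.1 : F) ^ s * (p.2 : F) ^ t = 0}
          + Nat.card {p : Fˣ × Fˣ // c + d * (p.1 : F) ^ s * (p.2 : F) ^ t = 0} := by ring
    have hmul : Nat.card Fˣ * Nat.card {p : Fˣ × Fˣ // c + d * (p.1:F)^s*(p.2:F)^t = 0}
        ≤ Nat.card Fˣ * Nat.card Fˣ := Nat.mul_le_mul le_rfl hNB
    have hsq : Nat.card Fˣ * Nat.card Fˣ = Nat.card Fˣ ^ 2 := (sq _).symm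
    have hmax := le_max_left (Nat.card Fˣ ^ 2)
      (Nat.card Fˣ ^ 2 + (Nat.card Fˣ + 1) * Nat.gcd t (Nat.card Fˣ) - 2 * Nat.card Fˣ)
    omega
  · by_cases hcd : c = 0 ∧ d = 0
    · obtain ⟨rfl, rfl⟩ := hcd
      rw [NB_both_zero] at hmaster
      have hSS : Nat.card {p : Fˣ × Fˣ // a + b * (p.1 : F) = 0 ∧
            (0:F) + 0 * (p.1 : F) ^ s * (p.2 : F) ^ t = 0}
          = Nat.card {p : Fˣ × Fˣ // a + b * (p.1 : F) = 0} :=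
        Nat.card_congr (Equiv.subtypeEquivRight fun p => and_iff_left (by simp))
      rw [hSS] at hmaster
      have hNA : Nat.card {p : Fˣ × Fˣ // a + b * (p.1 : F) = 0} ≤ Nat.card Fˣ := by
        by_cases hab2 : a ≠ 0 ∧ b ≠ 0
        · rw [NA_full hab2.1 hab2.2]
        · rw [NA_empty hab2 hab]; exact Nat.zero_le _
      have hexp : (Nat.card Fˣ + 1) * Nat.card {p : Fˣ × Fˣ // a + b * (p.1 : F) = 0}
          = Nat.card Fˣ * Nat.card {p : Fˣ × Fˣ // a + b * (p.1 : F) = 0}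
            + Nat.card {p : Fˣ × Fˣ // a + b * (p.1 : F) = 0} := by ring
      have hmul : Nat.card Fˣ * Nat.card {p : Fˣ × Fˣ // a + b * (p.1 : F) = 0}
          ≤ Nat.card Fˣ * Nat.card Fˣ := Nat.mul_le_mul le_rfl hNA
      have hsq : Nat.card Fˣ * Nat.card Fˣ = Nat.card Fˣ ^ 2 := (sq _).symm
      have hmax := le_max_left (Nat.card Fˣ ^ 2)
        (Nat.card Fˣ ^ 2 + (Nat.card Fˣ + 1) * Nat.gcd t (Nat.card Fˣ) - 2 * Nat.card Fˣ)
      omega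
    · by_cases hall : a ≠ 0 ∧ b ≠ 0 ∧ c ≠ 0 ∧ d ≠ 0
      · obtain ⟨ha, hb, hc, hd⟩ := hall
        rw [NA_full ha hb, NB_full s t hc hd hst] at hmaster
        have hSSg := SS_le_g s t ht (a := a) (b := b) (c := c) (d := d) ha hb hd
        have hmul : (Nat.card Fˣ + 1) * Nat.card {p : Fˣ × Fˣ // a + b * (p.1 : F) = 0 ∧
              c + d * (p.1 : F) ^ s * (p.2 : F) ^ t = 0}
            ≤ (Nat.card Fˣ + 1) * Nat.gcd t (Nat.card Fˣ) := Nat.mul_le_mul le_rfl hSSg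
        have hmax := le_max_right (Nat.card Fˣ ^ 2)
          (Nat.card Fˣ ^ 2 + (Nat.card Fˣ + 1) * Nat.gcd t (Nat.card Fˣ) - 2 * Nat.card Fˣ)
        omega
      · have hsplit : (¬(a ≠ 0 ∧ b ≠ 0)) ∨ (¬(c ≠ 0 ∧ d ≠ 0)) := by tauto
        have hmax := le_max_left (Nat.card Fˣ ^ 2)
          (Nat.card Fˣ ^ 2 + (Nat.card Fˣ + 1) * Nat.gcd t (Nat.card Fˣ) - 2 * Nat.card Fˣ)
        rcases hsplit with hA | hB
        · rw [NA_empty hA hab] at hmaster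
          have hSS := SS_le_NA s t a b c d
          rw [NA_empty hA hab] at hSS
          have : Nat.card {p : Fˣ × Fˣ // a + b * (p.1 : F) = 0 ∧
              c + d * (p.1 : F) ^ s * (p.2 : F) ^ t = 0} = 0 := by omega
          rw [this] at hmaster
          omega
        · rw [NB_empty s t hB hcd] at hmaster
          have hSS := SS_le_NB s t a b c d
          rw [NB_empty s t hB hcd] at hSS
          have : Nat.card {p : Fˣ × Fˣ // a + b * (p.1 : F) = 0 ∧
              c + d * (p.1 : F) ^ s * (p.2 : F) ^ t = 0} = 0 := by omega
          rw [this] at hmaster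
          omega


lemma witness1 (s t : ℕ) (hst : Nat.gcd s t = 1) (hm : 2 ≤ Nat.card Fˣ) :
    ∃ w ∈ toricCodeT F s t, w ≠ (0 : Fˣ × Fˣ × Fˣ → F) ∧ zcount w = Nat.card Fˣ ^ 2 := by
  have hone : (1 : F) ≠ 0 := one_ne_zero
  have hmone : (-1 : F) ≠ 0 := neg_ne_zero.mpr one_ne_zero
  refine ⟨fT s t (-1) 1 0 0, ⟨-1, 1, 0, 0, rfl⟩, ?_, ?_⟩
  case refine_2 =>
    have hmaster := master_fT (F := F) s t (-1) 1 0 0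
    rw [NA_full hmone hone, NB_both_zero] at hmaster
    have hSS : Nat.card {p : Fˣ × Fˣ // (-1 : F) + 1 * (p.1 : F) = 0 ∧
          (0:F) + 0 * (p.1 : F) ^ s * (p.2 : F) ^ t = 0}
        = Nat.card {p : Fˣ × Fˣ // (-1 : F) + 1 * (p.1 : F) = 0} :=
      Nat.card_congr (Equiv.subtypeEquivRight fun p => and_iff_left (by simp))
    rw [hSS, NA_full hmone hone] at hmaster
    have hexp : (Nat.card Fˣ + 1) * Nat.card Fˣ = Nat.card Fˣ ^ 2 + Nat.card Fˣ := by ring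
    omega
  case refine_1 =>
    intro h0
    have hmaster := master_fT (F := F) s t (-1) 1 0 0
    rw [h0, zcount_zero] at hmaster
    rw [NA_full hmone hone, NB_both_zero] at hmaster
    have hSS : Nat.card {p : Fˣ × Fˣ // (-1 : F) + 1 * (p.1 : F) = 0 ∧
          (0:F) + 0 * (p.1 : F) ^ s * (p.2 : F) ^ t = 0}
        = Nat.card {p : Fˣ × Fˣ // (-1 : F) + 1 * (p.1 : F) = 0} :=
      Nat.card_congr (Equiv.subtypeEquivRight fun p => and_iff_left (by simp))
    rw [hSS, NA_full hmone hone] at hmaster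
    have hexp : (Nat.card Fˣ + 1) * Nat.card Fˣ = Nat.card Fˣ ^ 2 + Nat.card Fˣ := by ring
    have hcube : Nat.card Fˣ ^ 3 = Nat.card Fˣ * Nat.card Fˣ ^ 2 := by ring
    have h2 : 2 * Nat.card Fˣ ^ 2 ≤ Nat.card Fˣ * Nat.card Fˣ ^ 2 :=
      Nat.mul_le_mul hm le_rfl
    have hpos : 0 < Nat.card Fˣ ^ 2 := pow_pos (by omega) 2
    omega


lemma SS_W2 (s t : ℕ) :
    Nat.card {p : Fˣ × Fˣ // (-1 : F) + 1 * (p.1 : F) = 0 ∧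
        (-1 : F) + 1 * (p.1 : F) ^ s * (p.2 : F) ^ t = 0}
      = Nat.card {y : Fˣ // y ^ t = 1} := by
  have hx1 : ∀ p : Fˣ × Fˣ, ((-1 : F) + 1 * (p.1 : F) = 0 ∧
      (-1 : F) + 1 * (p.1 : F) ^ s * (p.2 : F) ^ t = 0) → p.1 = 1 := by
    intro p hp
    apply Units.ext
    show (p.1 : F) = 1
    linear_combination hp.1
  have hy : ∀ p : Fˣ × Fˣ, ((-1 : F) + 1 * (p.1 : F) = 0 ∧
      (-1 : F) + 1 * (p.1 : F) ^ s * (p.2 : F) ^ t = 0) → p.2 ^ t = 1 := by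
    intro p hp
    have hx := hx1 p hp
    have h2 := hp.2
    rw [hx] at h2
    apply Units.ext
    push_cast
    simp only [Units.val_one, one_pow, one_mul] at h2 ⊢
    linear_combination h2
  refine Nat.card_congr ⟨fun p => ⟨p.1.2, hy p.1 p.2⟩, fun y => ⟨(1, y.1), ?_, ?_⟩, ?_, ?_⟩
  · show (-1 : F) + 1 * ((1 : Fˣ) : F) = 0
    simp
  · show (-1 : F) + 1 * ((1 : Fˣ) : F) ^ s * (y.1 : F) ^ t = 0
    have h := congrArg Units.val y.2
    push_cast at h
    simp [h]
  · intro p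
    exact Subtype.ext (Prod.ext (hx1 p.1 p.2).symm rfl)
  · intro y
    exact Subtype.ext rfl

lemma witness2 (s t : ℕ) (ht : t ≠ 0) (hst : Nat.gcd s t = 1) (hm : 2 ≤ Nat.card Fˣ) :
    ∃ w ∈ toricCodeT F s t, w ≠ (0 : Fˣ × Fˣ × Fˣ → F) ∧ zcount w =
      Nat.card Fˣ ^ 2 + (Nat.card Fˣ + 1) * Nat.gcd t (Nat.card Fˣ) - 2 * Nat.card Fˣ := by
  have hone : (1 : F) ≠ 0 := one_ne_zero
  have hmone : (-1 : F) ≠ 0 := neg_ne_zero.mpr one_ne_zero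
  have hg1 : 1 ≤ Nat.gcd t (Nat.card Fˣ) :=
    Nat.gcd_pos_of_pos_right _ (by omega)
  have hgm : Nat.gcd t (Nat.card Fˣ) ≤ Nat.card Fˣ :=
    Nat.le_of_dvd (by omega) (Nat.gcd_dvd_right _ _)
  have hmaster := master_fT (F := F) s t (-1) 1 (-1) 1
  rw [NA_full hmone hone, NB_full s t hmone hone hst, SS_W2 s t, card_tRoots t ht] at hmaster
  have hXle : (Nat.card Fˣ + 1) * Nat.gcd t (Nat.card Fˣ)
      ≤ (Nat.card Fˣ + 1) * Nat.card Fˣ := Nat.mul_le_mul le_rfl hgm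
  have hXexp : (Nat.card Fˣ + 1) * Nat.card Fˣ = Nat.card Fˣ ^ 2 + Nat.card Fˣ := by ring
  have hXge : (Nat.card Fˣ + 1) * 1 ≤ (Nat.card Fˣ + 1) * Nat.gcd t (Nat.card Fˣ) :=
    Nat.mul_le_mul le_rfl hg1
  refine ⟨fT s t (-1) 1 (-1) 1, ⟨-1, 1, -1, 1, rfl⟩, ?_, by omega⟩
  intro h0
  rw [h0, zcount_zero] at hmaster
  have hcube : Nat.card Fˣ ^ 3 = Nat.card Fˣ * Nat.card Fˣ ^ 2 := by ring
  have h2 : 2 * Nat.card Fˣ ^ 2 ≤ Nat.card Fˣ * Nat.card Fˣ ^ 2 :=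
    Nat.mul_le_mul hm le_rfl
  omega

lemma witness_max (s t : ℕ) (ht : t ≠ 0) (hst : Nat.gcd s t = 1) (hm : 2 ≤ Nat.card Fˣ) :
    ∃ w ∈ toricCodeT F s t, w ≠ (0 : Fˣ × Fˣ × Fˣ → F) ∧ zcount w =
      max (Nat.card Fˣ ^ 2)
        (Nat.card Fˣ ^ 2 + (Nat.card Fˣ + 1) * Nat.gcd t (Nat.card Fˣ) - 2 * Nat.card Fˣ) := by
  rcases le_total (Nat.card Fˣ ^ 2 + (Nat.card Fˣ + 1) * Nat.gcd t (Nat.card Fˣ)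
      - 2 * Nat.card Fˣ) (Nat.card Fˣ ^ 2) with hle | hle
  · obtain ⟨w, hw, hnz, hzc⟩ := witness1 (F := F) s t hst hm
    exact ⟨w, hw, hnz, by rw [hzc, max_eq_left hle]⟩
  · obtain ⟨w, hw, hnz, hzc⟩ := witness2 (F := F) s t ht hst hm
    exact ⟨w, hw, hnz, by rw [hzc, max_eq_right hle]⟩


lemma Minj {m g₁ g₂ : ℕ} (hm : 2 ≤ m) (h₁ : 1 ≤ g₁) (h₂ : 1 ≤ g₂)
    (h : max (m^2) (m^2 + (m+1)*g₁ - 2*m) = max (m^2) (m^2 + (m+1)*g₂ - 2*m)) :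
    g₁ = g₂ := by
  have key : ∀ g, 2 ≤ g → m^2 + 2 ≤ m^2 + (m+1)*g - 2*m := by
    intro g hg
    have h2 : (m+1)*2 ≤ (m+1)*g := Nat.mul_le_mul le_rfl hg
    omega
  have one1 : ∀ g, g = 1 → m^2 + (m+1)*g - 2*m ≤ m^2 := by
    intro g hg; subst hg; omega
  rcases Nat.lt_or_ge g₁ 2 with hg1 | hg1 <;> rcases Nat.lt_or_ge g₂ 2 with hg2 | hg2
  · omega
  · exfalso
    have k2 := key g₂ hg2
    rw [max_eq_left (one1 g₁ (by omega)), max_eq_right (by omega)] at h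
    omega
  · exfalso
    have k1 := key g₁ hg1
    rw [max_eq_right (by omega), max_eq_left (one1 g₂ (by omega))] at h
    omega
  · have k1 := key g₁ hg1
    have k2 := key g₂ hg2
    rw [max_eq_right (by omega), max_eq_right (by omega)] at h
    have hXX : (m+1)*g₁ = (m+1)*g₂ := by omega
    exact Nat.eq_of_mul_eq_mul_left (by omega) hXX

lemma exists_pow_unit {t₁ t₂ m : ℕ} (hm : 2 ≤ m) (hg : Nat.gcd t₁ m = Nat.gcd t₂ m) :
    ∃ e, Nat.Coprime e m ∧ e * t₁ ≡ t₂ [MOD m] := by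
  have hm0 : m ≠ 0 := by omega
  obtain ⟨g, hgdef⟩ : ∃ g, g = Nat.gcd t₁ m := ⟨_, rfl⟩
  have hg' : g = Nat.gcd t₂ m := by rw [hgdef, hg]
  have hgpos : 0 < g := by rw [hgdef]; exact Nat.gcd_pos_of_pos_right _ (by omega)
  obtain ⟨t₁', ht₁'⟩ : g ∣ t₁ := by rw [hgdef]; exact Nat.gcd_dvd_left _ _
  obtain ⟨t₂', ht₂'⟩ : g ∣ t₂ := by rw [hg']; exact Nat.gcd_dvd_left _ _
  obtain ⟨m', hm'⟩ : g ∣ m := by rw [hgdef]; exact Nat.gcd_dvd_right _ _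
  have hq₁ : t₁ / g = t₁' := by rw [ht₁', Nat.mul_div_cancel_left _ hgpos]
  have hq₂ : t₂ / g = t₂' := by rw [ht₂', Nat.mul_div_cancel_left _ hgpos]
  have hqm : m / g = m' := by rw [hm', Nat.mul_div_cancel_left _ hgpos]
  have hcop₁ : Nat.Coprime t₁' m' := by
    have hgp : 0 < Nat.gcd t₁ m := by rw [← hgdef]; exact hgpos
    have := Nat.coprime_div_gcd_div_gcd (m := t₁) (n := m) hgp
    rwa [← hgdef, hq₁, hqm] at this
  have hcop₂ : Nat.Coprime t₂' m' := by
    have hgp : 0 < Nat.gcd t₂ m := by rw [← hg']; exact hgpos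
    have := Nat.coprime_div_gcd_div_gcd (m := t₂) (n := m) hgp
    rwa [← hg', hq₂, hqm] at this
  haveI : NeZero m := ⟨hm0⟩
  have hdvd : m' ∣ m := ⟨g, by rw [hm', mul_comm]⟩
  obtain ⟨U, hU⟩ := ZMod.unitsMap_surjective hdvd
    ((ZMod.unitOfCoprime t₂' hcop₂) * (ZMod.unitOfCoprime t₁' hcop₁)⁻¹)
  refine ⟨(U : ZMod m).val, ZMod.val_coe_unit_coprime U, ?_⟩
  set e := ((U : ZMod m)).val with hedef
  have key : e * t₁' ≡ t₂' [MOD m'] := by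
    rw [← ZMod.natCast_eq_natCast_iff]
    push_cast
    have he : ((e : ℕ) : ZMod m') = ((ZMod.unitsMap hdvd U : (ZMod m')ˣ) : ZMod m') := by
      rw [hedef, ZMod.natCast_val]
      rfl
    rw [he, hU]
    push_cast
    rw [← ZMod.coe_unitOfCoprime t₁' hcop₁, mul_assoc]
    rw [Units.inv_mul, mul_one]
    rw [ZMod.coe_unitOfCoprime]
  have key2 := Nat.ModEq.mul_left' (c := g) key
  have hrw1 : g * (e * t₁') = e * t₁ := by rw [ht₁']; ring
  rw [hrw1, ← ht₂', ← hm'] at key2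
  exact key2

lemma pow_card_mod (y : Fˣ) (n : ℕ) : y ^ n = y ^ (n % Nat.card Fˣ) := by
  conv_lhs => rw [← Nat.div_add_mod n (Nat.card Fˣ)]
  rw [pow_add, pow_mul, pow_card_eq_one', one_pow, one_mul]

lemma equiv_of_gcd_eq (s t₁ t₂ : ℕ) (hm : 2 ≤ Nat.card Fˣ)
    (hgcd : Nat.gcd t₁ (Nat.card Fˣ) = Nat.gcd t₂ (Nat.card Fˣ)) :
    MonomiallyEquiv (toricCodeT F s t₁) (toricCodeT F s t₂) := by
  obtain ⟨e, hcop, hmod⟩ := exists_pow_unit hm hgcd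
  have hpow : ∀ y : Fˣ, (y ^ e) ^ t₁ = y ^ t₂ := by
    intro y
    rw [← pow_mul, pow_card_mod y (e * t₁), pow_card_mod y t₂, hmod]
  have hcop' : (Nat.card Fˣ).Coprime e := hcop.symm
  let σ : Fˣ ≃ Fˣ := powCoprime hcop'
  have hσ : ∀ y : Fˣ, σ y = y ^ e := fun y => rfl
  refine ⟨Equiv.prodCongr (Equiv.refl Fˣ) (Equiv.prodCongr σ (Equiv.refl Fˣ)),
    fun _ => 1, ?_⟩
  have hpt : ∀ (a b c d : F) (v : Fˣ × Fˣ × Fˣ),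
      ((1 : Fˣ) : F) * fT s t₁ a b c d
        ((Equiv.prodCongr (Equiv.refl Fˣ) (Equiv.prodCongr σ (Equiv.refl Fˣ))) v)
      = fT s t₂ a b c d v := by
    intro a b c d v
    have hv : ((v.2.1 : F) ^ e) ^ t₁ = (v.2.1 : F) ^ t₂ := by
      have := congrArg Units.val (hpow v.2.1)
      push_cast at this
      exact this
    simp only [Equiv.prodCongr_apply, Equiv.coe_refl, Prod.map_fst, Prod.map_snd, Prod.map_apply, id_eq, fT,
      Units.val_one, one_mul, hσ]
    push_cast
    rw [hv]
  ext w
  simp only [toricCodeT, Set.mem_setOf_eq]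
  constructor
  · rintro ⟨a, b, c, d, rfl⟩
    exact ⟨fT s t₁ a b c d, ⟨a, b, c, d, rfl⟩, by funext v; rw [hpt]⟩
  · rintro ⟨cw, ⟨a, b, c, d, rfl⟩, rfl⟩
    exact ⟨a, b, c, d, by funext v; rw [hpt]⟩

end ToricAux

/-- `C_{T(s,t₁)}` and `C_{T(s,t₂)}` are monomially equivalent iff
`gcd(t₁, q−1) = gcd(t₂, q−1)`. -/
theorem stmt5 (F : Type) [Field F] [Fintype F] (s t₁ t₂ : ℕ)
    (hq : 2 < Fintype.card F) (ht₁ : 1 ≤ t₁) (ht₂ : 1 ≤ t₂)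
    (hst₁ : Nat.gcd s t₁ = 1) (hst₂ : Nat.gcd s t₂ = 1) :
    MonomiallyEquiv (toricCodeT F s t₁) (toricCodeT F s t₂) ↔
      Nat.gcd t₁ (Fintype.card F - 1) = Nat.gcd t₂ (Fintype.card F - 1) := by
  classical
  have hcardu : Nat.card Fˣ = Fintype.card F - 1 := by
    rw [Nat.card_eq_fintype_card, Fintype.card_units]
  have hm : 2 ≤ Nat.card Fˣ := by omega
  have ht₁0 : t₁ ≠ 0 := by omega
  have ht₂0 : t₂ ≠ 0 := by omega
  rw [← hcardu]
  constructor
  · rintro ⟨π, lam, hC⟩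
    have le1 : max (Nat.card Fˣ ^ 2)
        (Nat.card Fˣ ^ 2 + (Nat.card Fˣ + 1) * Nat.gcd t₁ (Nat.card Fˣ) - 2 * Nat.card Fˣ)
        ≤ max (Nat.card Fˣ ^ 2)
        (Nat.card Fˣ ^ 2 + (Nat.card Fˣ + 1) * Nat.gcd t₂ (Nat.card Fˣ) - 2 * Nat.card Fˣ) := by
      obtain ⟨w, hw, hnz, hzc⟩ := witness_max (F := F) s t₁ ht₁0 hst₁ hm
      have hmem : (fun v => (lam v : F) * w (π v)) ∈ toricCodeT F s t₂ := by
        rw [hC]; exact ⟨w, hw, rfl⟩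
      obtain ⟨a, b, c, d, hw'⟩ := hmem
      have hzc' : zcount (fT s t₂ a b c d) = zcount w := by
        rw [← hw', zcount_perm]
      have hnz' : ¬(a = 0 ∧ b = 0 ∧ c = 0 ∧ d = 0) := by
        rintro ⟨rfl, rfl, rfl, rfl⟩
        rw [fT_zero] at hw'
        apply hnz
        funext u
        have h1 := congrFun hw' (π.symm u)
        simp only [Pi.zero_apply] at h1
        rcases mul_eq_zero.mp h1 with h2 | h2
        · exact absurd h2 (Units.ne_zero _)
        · rw [Equiv.apply_symm_apply] at h2
          simpa using h2
      have hb := zcount_le (F := F) s t₂ ht₂0 hst₂ a b c d hnz'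
      rw [hzc', hzc] at hb
      exact hb
    have le2 : max (Nat.card Fˣ ^ 2)
        (Nat.card Fˣ ^ 2 + (Nat.card Fˣ + 1) * Nat.gcd t₂ (Nat.card Fˣ) - 2 * Nat.card Fˣ)
        ≤ max (Nat.card Fˣ ^ 2)
        (Nat.card Fˣ ^ 2 + (Nat.card Fˣ + 1) * Nat.gcd t₁ (Nat.card Fˣ) - 2 * Nat.card Fˣ) := by
      obtain ⟨w, hw, hnz, hzc⟩ := witness_max (F := F) s t₂ ht₂0 hst₂ hm
      rw [hC] at hw
      obtain ⟨cw, hcw, rfl⟩ := hw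
      obtain ⟨a, b, c, d, rfl⟩ := hcw
      have hzc2 : zcount (fun v => (lam v : F) * fT s t₁ a b c d (π v))
          = zcount (fT s t₁ a b c d) := zcount_perm π lam _
      have hnz2 : ¬(a = 0 ∧ b = 0 ∧ c = 0 ∧ d = 0) := by
        rintro ⟨rfl, rfl, rfl, rfl⟩
        apply hnz
        funext v
        rw [fT_zero]
        simp
      have hb := zcount_le (F := F) s t₁ ht₁0 hst₁ a b c d hnz2
      rw [hzc2] at hzc
      exact le_of_eq_of_le hzc.symm hb
    exact Minj hm (Nat.gcd_pos_of_pos_right _ (by omega))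
      (Nat.gcd_pos_of_pos_right _ (by omega)) (le_antisymm le1 le2)
  · intro h
    exact equiv_of_gcd_eq s t₁ t₂ hm h
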